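/- For every m ≥ 4, there exists a binary 2-covering array of size m and degree binom(m−1, ⌊m/2⌋−1); that is, the maximal degree of a binary 2-covering array of size m satisfies CAN̄(2,m,2) ≥ binom(m−1, ⌊m/2⌋−1). In particular, the standard maximal binary 2-covering array of size m is a 2-covering array. -/

import Mathlib

/-- An `m × n` matrix over `B_q = {0,…,q-1}` is a `t`-covering array if for any `t`
distinct column indices and any `q`-ary vector of length `t`, some row realizes it. -/
def IsCoveringArray (m n q t : ℕ) (C : Fin m → Fin n → Fin q) : Prop :=
  ∀ cols : Fin t → Fin n, Function.Injective cols →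
    ∀ v : Fin t → Fin q, ∃ r : Fin m, ∀ j : Fin t, C r (cols j) = v j

/-- `CAN t n q` : the minimal size `m` for which a `CA(m; t, n, q)` exists. -/
noncomputable def CAN (t n q : ℕ) : ℕ :=
  sInf { m | ∃ C : Fin m → Fin n → Fin q, IsCoveringArray m n q t C }

/-- The weight of the `i`-th column: the number of nonzero entries. -/
def colWt {m n q : ℕ} (C : Fin m → Fin n → Fin q) (i : Fin n) : ℕ :=
  (Finset.univ.filter fun r : Fin m => (C r i : ℕ) ≠ 0).card

/-- The support of the `i`-th column: the set of coordinates where it is nonzero. -/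
def colSupp {m n q : ℕ} (C : Fin m → Fin n → Fin q) (i : Fin n) : Finset (Fin m) :=
  Finset.univ.filter fun r : Fin m => (C r i : ℕ) ≠ 0

/-- The Hamming distance between the `i`-th and `j`-th columns. -/
def colDist {m n q : ℕ} (C : Fin m → Fin n → Fin q) (i j : Fin n) : ℕ :=
  (Finset.univ.filter fun r : Fin m => C r i ≠ C r j).card

/-- Two arrays are equivalent if one is obtained from the other by a row permutation,
a column permutation, and value permutations applied columnwise. -/
def CAEquiv {m n q : ℕ} (C C' : Fin m → Fin n → Fin q) : Prop :=
  ∃ (σ : Equiv.Perm (Fin m)) (τ : Equiv.Perm (Fin n)) (f : Fin n → Equiv.Perm (Fin q)),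
    ∀ r i, C' r i = f i (C (σ r) (τ i))

/-- The standard maximal binary 2-covering array of size `m` : an
`m × (m-1).choose (m/2 - 1)` binary matrix whose first row is all ones and whose columns,
restricted to the remaining `m - 1` rows, are exactly (i.e. are pairwise distinct) the binary
vectors of length `m-1` with `m/2 - 1` ones. -/
def IsStandardMaxArray (m : ℕ) (S : Fin m → Fin ((m-1).choose (m/2 - 1)) → Fin 2) : Prop :=
  (∀ (r : Fin m) (i), (r : ℕ) = 0 → S r i = 1) ∧
  (Function.Injective fun i => fun r => S r i) ∧
  (∀ i, (Finset.univ.filter fun r : Fin m => (r : ℕ) ≠ 0 ∧ S r i = 1).card = m/2 - 1)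

open Finset

private lemma fin2_cases (x : Fin 2) : x = 0 ∨ x = 1 := by omega

-- helper: the standard array built from an equivalence with `k`-subsets
open Classical in
noncomputable def stdArray (m : ℕ)
    (e : Fin ((m-1).choose (m/2-1)) ≃ {s : Finset (Fin (m-1)) // s.card = m/2-1}) :
    Fin m → Fin ((m-1).choose (m/2-1)) → Fin 2 :=
  fun r i => if (r : ℕ) = 0 then 1 else
    if ∃ x ∈ (e i).val, (x : ℕ) + 1 = (r : ℕ) then 1 else 0

private lemma stdArray_filter_eq (m : ℕ)
    (e : Fin ((m-1).choose (m/2-1)) ≃ {s : Finset (Fin (m-1)) // s.card = m/2-1})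
    (emb : Fin (m-1) ↪ Fin m) (hemb : ∀ x, (emb x : ℕ) = (x : ℕ) + 1)
    (i : Fin ((m-1).choose (m/2-1))) :
    (Finset.univ.filter fun r : Fin m => (r : ℕ) ≠ 0 ∧ stdArray m e r i = 1)
      = ((e i).val).map emb := by
  ext r
  simp only [mem_filter, mem_univ, true_and, mem_map]
  constructor
  · rintro ⟨hr0, h1⟩
    unfold stdArray at h1
    rw [if_neg hr0] at h1
    by_cases hc : ∃ x ∈ (e i).val, (x : ℕ) + 1 = (r : ℕ)
    · obtain ⟨x, hx, hxr⟩ := hc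
      exact ⟨x, hx, Fin.ext (by rw [hemb]; exact hxr)⟩
    · rw [if_neg hc] at h1
      exact absurd h1 (by decide)
  · rintro ⟨x, hx, rfl⟩
    refine ⟨by rw [hemb]; omega, ?_⟩
    unfold stdArray
    rw [if_neg (by rw [hemb]; omega), if_pos ⟨x, hx, (hemb x).symm⟩]


/-- for `m ≥ 4` there exists a binary 2-covering array of size `m` and degree
`(m-1).choose (m/2 - 1)`, i.e. `CAN̄(2,m,2) ≥ (m-1).choose (m/2 - 1)`; in particular every
standard maximal binary 2-covering array is a 2-covering array. -/
theorem standard_maximal_lower_bound (m : ℕ) (hm : 4 ≤ m) :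
    (∃ C : Fin m → Fin ((m-1).choose (m/2 - 1)) → Fin 2,
      IsCoveringArray m ((m-1).choose (m/2 - 1)) 2 2 C) ∧
    (∀ S : Fin m → Fin ((m-1).choose (m/2 - 1)) → Fin 2,
      IsStandardMaxArray m S → IsCoveringArray m ((m-1).choose (m/2 - 1)) 2 2 S) := by
  classical
  haveI : NeZero m := ⟨by omega⟩
  -- Part 2 first: every standard maximal array is a covering array.
  have part2 : ∀ S : Fin m → Fin ((m-1).choose (m/2 - 1)) → Fin 2,
      IsStandardMaxArray m S → IsCoveringArray m ((m-1).choose (m/2 - 1)) 2 2 S := by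
    intro S hS
    obtain ⟨h0, hinj, hwt⟩ := hS
    set A : Fin ((m-1).choose (m/2 - 1)) → Finset (Fin m) :=
      fun i => Finset.univ.filter fun r : Fin m => (r : ℕ) ≠ 0 ∧ S r i = 1 with hA
    -- key fact: the value of S at a nonzero row is 0 or 1, and membership in A
    have memA : ∀ i r, r ∈ A i ↔ (r : ℕ) ≠ 0 ∧ S r i = 1 := by
      intro i r; simp [hA]
    -- distinct columns have distinct supports
    have hAne : ∀ a b, a ≠ b → A a ≠ A b := by
      intro a b hab hAB
      apply hab
      apply hinj
      funext r
      show S r a = S r b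
      by_cases hr : (r : ℕ) = 0
      · rw [h0 r a hr, h0 r b hr]
      · rcases fin2_cases (S r a) with ha | ha <;> rcases fin2_cases (S r b) with hb | hb
        · rw [ha, hb]
        · exfalso
          have : r ∈ A b := (memA b r).2 ⟨hr, hb⟩
          rw [← hAB] at this
          have := ((memA a r).1 this).2
          rw [ha] at this; exact absurd this (by decide)
        · exfalso
          have : r ∈ A a := (memA a r).2 ⟨hr, ha⟩
          rw [hAB] at this
          have := ((memA b r).1 this).2
          rw [hb] at this; exact absurd this (by decide)
        · rw [ha, hb]
    -- one-zero existence
    have onezero : ∀ a b, a ≠ b → ∃ r : Fin m, (r : ℕ) ≠ 0 ∧ S r a = 1 ∧ S r b = 0 := by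
      intro a b hab
      have hsub : ¬ A a ⊆ A b := by
        intro hsub
        exact hAne a b hab (Finset.eq_of_subset_of_card_le hsub (by rw [hwt a, hwt b]))
      obtain ⟨r, hra, hrb⟩ := Finset.not_subset.1 hsub
      obtain ⟨hr0, hr1⟩ := (memA a r).1 hra
      refine ⟨r, hr0, hr1, ?_⟩
      rcases fin2_cases (S r b) with h | h
      · exact h
      · exact absurd ((memA b r).2 ⟨hr0, h⟩) hrb
    -- zero-zero existence
    have zerozero : ∀ a b, ∃ r : Fin m, (r : ℕ) ≠ 0 ∧ S r a = 0 ∧ S r b = 0 := by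
      intro a b
      set Z : Finset (Fin m) :=
        Finset.univ.filter fun r : Fin m => (r : ℕ) ≠ 0 ∧ S r a = 0 with hZ
      have hZcard : Z.card = (m - 1) - (m/2 - 1) := by
        have hN : (Finset.univ.filter fun r : Fin m => (r : ℕ) ≠ 0).card = m - 1 := by
          have : (Finset.univ.filter fun r : Fin m => (r : ℕ) ≠ 0)
              = Finset.univ.erase (0 : Fin m) := by
            rw [← Finset.filter_ne']
            apply Finset.filter_congr
            intro r _
            rw [Ne, Ne, Fin.ext_iff, Fin.val_zero]
          rw [this, Finset.card_erase_of_mem (mem_univ _), Finset.card_univ, Fintype.card_fin]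
        have hunion : A a ∪ Z = Finset.univ.filter fun r : Fin m => (r : ℕ) ≠ 0 := by
          ext r
          simp only [hA, hZ, Finset.mem_union, mem_filter, mem_univ, true_and]
          constructor
          · rintro (⟨h, _⟩ | ⟨h, _⟩) <;> exact h
          · intro h
            rcases fin2_cases (S r a) with hv | hv
            · exact Or.inr ⟨h, hv⟩
            · exact Or.inl ⟨h, hv⟩
        have hdisj : Disjoint (A a) Z := by
          rw [Finset.disjoint_left]
          intro r hra hrz
          have h1 := ((memA a r).1 hra).2
          have h2 : S r a = 0 := by
            have := (Finset.mem_filter.1 hrz).2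
            exact this.2
          rw [h1] at h2; exact absurd h2 (by decide)
        have := Finset.card_union_of_disjoint hdisj
        rw [hunion, hN, hwt a] at this
        omega
      have hsub : ¬ Z ⊆ A b := by
        intro hsub
        have := Finset.card_le_card hsub
        rw [hZcard, hwt b] at this
        omega
      obtain ⟨r, hrz, hrb⟩ := Finset.not_subset.1 hsub
      obtain ⟨hr0, hr1⟩ := (Finset.mem_filter.1 hrz).2
      refine ⟨r, hr0, hr1, ?_⟩
      rcases fin2_cases (S r b) with h | h
      · exact h
      · exact absurd ((memA b r).2 ⟨hr0, h⟩) hrb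
    -- now the covering property
    intro cols hc v
    have hne : cols 0 ≠ cols 1 := fun h => absurd (hc h) (by decide)
    have hall : ∀ (r : Fin m), S r (cols 0) = v 0 → S r (cols 1) = v 1 →
        ∀ j : Fin 2, S r (cols j) = v j := by
      intro r h0' h1' j
      rcases fin2_cases j with rfl | rfl
      · exact h0'
      · exact h1'
    rcases fin2_cases (v 0) with hv0 | hv0 <;> rcases fin2_cases (v 1) with hv1 | hv1
    · obtain ⟨r, _, hra, hrb⟩ := zerozero (cols 0) (cols 1)
      exact ⟨r, hall r (by rw [hra, hv0]) (by rw [hrb, hv1])⟩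
    · obtain ⟨r, _, hra, hrb⟩ := onezero (cols 1) (cols 0) hne.symm
      exact ⟨r, hall r (by rw [hrb, hv0]) (by rw [hra, hv1])⟩
    · obtain ⟨r, _, hra, hrb⟩ := onezero (cols 0) (cols 1) hne
      exact ⟨r, hall r (by rw [hra, hv0]) (by rw [hrb, hv1])⟩
    · refine ⟨⟨0, by omega⟩, hall _ ?_ ?_⟩
      · rw [h0 _ _ rfl, hv0]
      · rw [h0 _ _ rfl, hv1]
  -- Part 1: construct a standard maximal array.
  have hcard : Fintype.card {s : Finset (Fin (m-1)) // s.card = m/2-1}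
      = (m-1).choose (m/2-1) := by
    rw [Fintype.card_finset_len, Fintype.card_fin]
  let e : Fin ((m-1).choose (m/2-1)) ≃ {s : Finset (Fin (m-1)) // s.card = m/2-1} :=
    (Fintype.equivFinOfCardEq hcard).symm
  let emb : Fin (m-1) ↪ Fin m :=
    ⟨fun x => ⟨(x : ℕ) + 1, by have := x.isLt; omega⟩, by
      intro x y h
      have := congrArg Fin.val h
      simp only at this
      exact Fin.ext (by omega)⟩
  have hemb : ∀ x : Fin (m-1), (emb x : ℕ) = (x : ℕ) + 1 := fun x => rfl
  have hfilter := stdArray_filter_eq m e emb hemb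
  have hstd : IsStandardMaxArray m (stdArray m e) := by
    refine ⟨?_, ?_, ?_⟩
    · intro r i hr
      unfold stdArray
      rw [if_pos hr]
    · intro a b hab
      have hab' : ∀ r, stdArray m e r a = stdArray m e r b := fun r => congrFun hab r
      have key : (e a).val = (e b).val := by
        have heq : (Finset.univ.filter fun r : Fin m => (r : ℕ) ≠ 0 ∧ stdArray m e r a = 1)
            = Finset.univ.filter fun r : Fin m => (r : ℕ) ≠ 0 ∧ stdArray m e r b = 1 := by
          apply Finset.filter_congr
          intro r _
          rw [hab' r]
        have h2 := (hfilter a).symm.trans (heq.trans (hfilter b))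
        exact Finset.map_injective emb h2
      exact e.injective (Subtype.ext key)
    · intro i
      rw [hfilter i, Finset.card_map]
      exact (e i).prop
  exact ⟨⟨stdArray m e, part2 _ hstd⟩, part2⟩
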